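/- For positive integers m ≠ l and initial radii a(0) = a > 0, b(0) = b > 0, the functions a(t) = a^{m/(m-l)}(a - (l-m)b^{-1}t)^{l/(l-m)} and b(t) = b^{l/(l-m)}(b + (m-l)a^{-1}t)^{m/(m-l)} solve the system a'(t) = -l/b(t), b'(t) = m/a(t) on the maximal interval of time on which both expressions inside the powers are positive. -/

import Mathlib

open Real Filter Topology

lemma eqlem (M L A B u v : ℝ) (hML : M ≠ L) (hA : 0 < A) (hB : 0 < B)
    (hu : 0 < u) (hv : 0 < v) (huv : u * B = v * A) :
    B ^ (L/(L-M)) * ((M-L)*A⁻¹*((M/(M-L)) * v ^ (M/(M-L) - 1))) =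
      M / (A ^ (M/(M-L)) * u ^ (L/(L-M))) := by
  have hML' : M - L ≠ 0 := sub_ne_zero.mpr hML
  have hLM' : L - M ≠ 0 := sub_ne_zero.mpr (Ne.symm hML)
  have hv' : v = u * (B / A) := by
    field_simp
    linarith [huv]
  have hq1 : M/(M-L) - 1 = -(L/(L-M)) := by
    field_simp
    ring
  have hpq : L/(L-M) + M/(M-L) = 1 := by
    field_simp
    ring
  have hA1 : A ^ (L/(L-M)) * A ^ (M/(M-L)) = A := by
    rw [← Real.rpow_add hA, hpq, Real.rpow_one]
  have hYne : A ^ (L/(L-M)) ≠ 0 := (Real.rpow_pos_of_pos hA _).ne'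
  have hZ : A ^ (M/(M-L)) = A / A ^ (L/(L-M)) := by
    rw [eq_div_iff hYne]
    linear_combination hA1
  rw [hv', hq1, Real.mul_rpow hu.le (by positivity), Real.div_rpow hB.le hA.le,
    Real.rpow_neg hu.le, Real.rpow_neg hB.le, Real.rpow_neg hA.le, hZ]
  have hXne : B ^ (L/(L-M)) ≠ 0 := (Real.rpow_pos_of_pos hB _).ne'
  have hUne : u ^ (L/(L-M)) ≠ 0 := (Real.rpow_pos_of_pos hu _).ne'
  field_simp


/-- For m ≠ l, the explicit formulas
a(t) = a^{m/(m-l)} (a - (l-m)b⁻¹t)^{l/(l-m)},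
b(t) = b^{l/(l-m)} (b + (m-l)a⁻¹t)^{m/(m-l)}
solve a' = -l/b, b' = m/a wherever both bases are positive. -/
theorem sphere_product_explicit_solution (m l : ℕ) (hm : 0 < m) (hl : 0 < l)
    (hml : m ≠ l) (a b : ℝ) (ha : 0 < a) (hb : 0 < b) :
    ∀ t : ℝ, 0 < a - ((l : ℝ) - m) * b⁻¹ * t → 0 < b + ((m : ℝ) - l) * a⁻¹ * t →
      HasDerivAt (fun s : ℝ =>
          a ^ ((m : ℝ) / ((m : ℝ) - l)) *
            (a - ((l : ℝ) - m) * b⁻¹ * s) ^ ((l : ℝ) / ((l : ℝ) - m)))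
        (-(l : ℝ) /
          (b ^ ((l : ℝ) / ((l : ℝ) - m)) *
            (b + ((m : ℝ) - l) * a⁻¹ * t) ^ ((m : ℝ) / ((m : ℝ) - l)))) t ∧
      HasDerivAt (fun s : ℝ =>
          b ^ ((l : ℝ) / ((l : ℝ) - m)) *
            (b + ((m : ℝ) - l) * a⁻¹ * s) ^ ((m : ℝ) / ((m : ℝ) - l)))
        ((m : ℝ) /
          (a ^ ((m : ℝ) / ((m : ℝ) - l)) *
            (a - ((l : ℝ) - m) * b⁻¹ * t) ^ ((l : ℝ) / ((l : ℝ) - m)))) t := by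
  intro t hu hv
  have hML : (m : ℝ) ≠ (l : ℝ) := by exact_mod_cast hml
  have huv : (a - ((l : ℝ) - m) * b⁻¹ * t) * b = (b + ((m : ℝ) - l) * a⁻¹ * t) * a := by
    field_simp
    ring
  constructor
  · -- first component
    have h1 : HasDerivAt (fun s : ℝ => a - ((l : ℝ) - m) * b⁻¹ * s)
        (-(((l : ℝ) - m) * b⁻¹)) t := by
      simpa using ((hasDerivAt_id t).const_mul (((l : ℝ) - m) * b⁻¹)).const_sub a
    have h2 := (h1.rpow_const (p := (l : ℝ) / ((l : ℝ) - m)) (Or.inl hu.ne')).const_mul (a ^ ((m : ℝ) / ((m : ℝ) - l)))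
    refine h2.congr_deriv (Eq.symm ?_)
    have he := eqlem (l : ℝ) (m : ℝ) b a
      (b + ((m : ℝ) - l) * a⁻¹ * t) (a - ((l : ℝ) - m) * b⁻¹ * t)
      hML.symm hb ha hv hu huv.symm
    linear_combination he
  · -- second component
    have h1 : HasDerivAt (fun s : ℝ => b + ((m : ℝ) - l) * a⁻¹ * s)
        (((m : ℝ) - l) * a⁻¹) t := by
      simpa using ((hasDerivAt_id t).const_mul (((m : ℝ) - l) * a⁻¹)).const_add b
    have h2 := (h1.rpow_const (p := (m : ℝ) / ((m : ℝ) - l)) (Or.inl hv.ne')).const_mul (b ^ ((l : ℝ) / ((l : ℝ) - m)))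
    refine h2.congr_deriv (Eq.symm ?_)
    have he := eqlem (m : ℝ) (l : ℝ) a b
      (a - ((l : ℝ) - m) * b⁻¹ * t) (b + ((m : ℝ) - l) * a⁻¹ * t)
      hML ha hb hu hv huv
    linear_combination (-1 : ℝ) * he
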